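/- For |j| ≥ 1 and κ > 0, the function r ↦ K_{|j|}(κ r) is not square integrable on (0,∞) with respect to the measure r dr. -/

import Mathlib

/-- Modified Bessel function of the second kind of (real) order `ν`, for positive
argument, defined by the integral representation
`K_ν(x) = ∫₀^∞ exp(−x cosh t) cosh(ν t) dt`. -/
noncomputable def besselK (ν x : ℝ) : ℝ :=
  ∫ t in Set.Ioi (0 : ℝ), Real.exp (-x * Real.cosh t) * Real.cosh (ν * t)

open Real Set MeasureTheory

-- helpers
lemma cosh_le_exp_aux {t : ℝ} (ht : 0 ≤ t) : Real.cosh t ≤ Real.exp t := by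
  rw [Real.cosh_eq]
  nlinarith [Real.exp_le_exp.2 (neg_le_self ht), Real.exp_pos t]

lemma half_exp_le_cosh (t : ℝ) : Real.exp t / 2 ≤ Real.cosh t := by
  rw [Real.cosh_eq]
  nlinarith [Real.exp_pos (-t)]

lemma int_aux {x : ℝ} (hx : 0 < x) :
    IntegrableOn (fun t => Real.exp (t - x * Real.exp t)) (Ioi 0) := by
  have hdom : IntegrableOn (fun t => Real.exp (4 / x) * Real.exp (-(1:ℝ) * t)) (Ioi 0) :=
    (exp_neg_integrableOn_Ioi 0 one_pos).const_mul _
  refine hdom.integrable.mono ?_ ?_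
  · exact (Real.continuous_exp.comp (continuous_id.sub (continuous_const.mul Real.continuous_exp))).aestronglyMeasurable
  · filter_upwards [ae_restrict_mem measurableSet_Ioi] with t ht
    simp only [norm_mul, Real.norm_eq_abs, abs_of_pos (Real.exp_pos _), ← Real.exp_add]
    rw [Real.exp_le_exp]
    have het : Real.exp t = Real.exp (t/2) * Real.exp (t/2) := by
      rw [← Real.exp_add]; ring_nf
    have h1 : t ^ 2 / 4 ≤ Real.exp t := by
      have h2 := Real.add_one_le_exp (t/2)
      nlinarith [Real.exp_pos (t/2), le_of_lt (mem_Ioi.mp ht)]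
    have ht' := le_of_lt (mem_Ioi.mp ht)
    have h3 := mul_le_mul_of_nonneg_left h1 hx.le
    have h4 : x * (4 / x) = 4 := by field_simp
    nlinarith [sq_nonneg (x * t - 4), mul_pos hx hx]

lemma besselK_integrand_integrable {ν x : ℝ} (hν : 0 ≤ ν) (hx : 0 < x) :
    IntegrableOn (fun t => Real.exp (-x * Real.cosh t) * Real.cosh (ν * t)) (Ioi 0) := by
  have hdom : IntegrableOn
      (fun t => Real.exp ((ν + 1) ^ 2 * (4 / x)) * Real.exp (-(1:ℝ) * t)) (Ioi 0) :=
    (exp_neg_integrableOn_Ioi 0 one_pos).const_mul _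
  refine hdom.integrable.mono ?_ ?_
  · exact ((Real.continuous_exp.comp ((continuous_const.mul Real.continuous_cosh))).mul
      (Real.continuous_cosh.comp (continuous_const.mul continuous_id))).aestronglyMeasurable
  · filter_upwards [ae_restrict_mem measurableSet_Ioi] with t ht
    have ht' : (0:ℝ) ≤ t := le_of_lt ht
    have hc1 : (0:ℝ) < Real.cosh (ν * t) := Real.cosh_pos _
    rw [Real.norm_eq_abs, Real.norm_eq_abs, abs_of_pos (mul_pos (Real.exp_pos _) hc1),
      abs_of_pos (mul_pos (Real.exp_pos _) (Real.exp_pos _))]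
    have h1 : Real.cosh (ν * t) ≤ Real.exp (ν * t) :=
      cosh_le_exp_aux (mul_nonneg hν ht')
    have h2 : Real.exp t / 2 ≤ Real.cosh t := half_exp_le_cosh t
    have h3 : Real.exp (-x * Real.cosh t) ≤ Real.exp (-x * (Real.exp t / 2)) := by
      rw [Real.exp_le_exp]; nlinarith
    calc Real.exp (-x * Real.cosh t) * Real.cosh (ν * t)
        ≤ Real.exp (-x * (Real.exp t / 2)) * Real.exp (ν * t) := by
          exact mul_le_mul h3 h1 hc1.le (Real.exp_pos _).le
      _ = Real.exp (ν * t - x / 2 * Real.exp t) := by rw [← Real.exp_add]; ring_nf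
      _ ≤ Real.exp ((ν + 1) ^ 2 * (4 / x)) * Real.exp (-(1:ℝ) * t) := by
          rw [← Real.exp_add, Real.exp_le_exp]
          have het : Real.exp t = Real.exp (t/2) * Real.exp (t/2) := by
            rw [← Real.exp_add]; ring_nf
          have h1' : t ^ 2 / 4 ≤ Real.exp t := by
            have h2' := Real.add_one_le_exp (t/2)
            nlinarith [Real.exp_pos (t/2)]
          have h3' := mul_le_mul_of_nonneg_left h1' (by linarith : (0:ℝ) ≤ x / 2)
          have h4 : x * ((ν+1)^2 * (4 / x)) = 4 * (ν+1)^2 := by field_simp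
          nlinarith [sq_nonneg (x * t - 4 * (ν + 1)), mul_pos hx hx, sq_nonneg (ν+1)]

lemma integral_val {x : ℝ} (hx : 0 < x) :
    ∫ t in Ioi (0:ℝ), Real.exp (t - x * Real.exp t) = Real.exp (-x) / x := by
  have hderiv : ∀ t ∈ Ioi (0:ℝ),
      HasDerivAt (fun t => -Real.exp (-x * Real.exp t) / x)
        (Real.exp (t - x * Real.exp t)) t := by
    intro t _
    have h1 : HasDerivAt (fun t => -x * Real.exp t) (-x * Real.exp t) t :=
      (Real.hasDerivAt_exp t).const_mul (-x)
    have h2 := (h1.exp).neg.div_const x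
    refine h2.congr_deriv ?_
    have : Real.exp (t - x * Real.exp t) = Real.exp (-x * Real.exp t) * Real.exp t := by
      rw [← Real.exp_add]; ring_nf
    rw [this, div_eq_iff hx.ne']
    ring
  have hint : IntegrableOn (fun t => Real.exp (t - x * Real.exp t)) (Ioi 0) := int_aux hx
  have hcont : ContinuousWithinAt (fun t => -Real.exp (-x * Real.exp t) / x) (Ici 0) 0 :=
    (((Real.continuous_exp.comp (continuous_const.mul Real.continuous_exp)).neg).div_const x
      ).continuousWithinAt
  have htend : Filter.Tendsto (fun t => -Real.exp (-x * Real.exp t) / x)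
      Filter.atTop (nhds 0) := by
    have h1 : Filter.Tendsto (fun t => -x * Real.exp t) Filter.atTop Filter.atBot :=
      (Real.tendsto_exp_atTop).const_mul_atTop_of_neg (by linarith)
    have h2 := (Real.tendsto_exp_atBot.comp h1).neg.div_const x
    simpa using h2
  have := MeasureTheory.integral_Ioi_of_hasDerivAt_of_tendsto hcont hderiv hint htend
  rw [this]
  simp [Real.exp_zero]
  ring

lemma besselK_lower {ν x : ℝ} (hν : 1 ≤ ν) (hx : 0 < x) :
    Real.exp (-x) / (2 * x) ≤ besselK ν x := by
  rw [besselK]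
  have key : ∀ t ∈ Ioi (0:ℝ),
      (1/2) * Real.exp (t - x * Real.exp t) ≤
        Real.exp (-x * Real.cosh t) * Real.cosh (ν * t) := by
    intro t ht
    have ht' : (0:ℝ) ≤ t := le_of_lt (mem_Ioi.mp ht)
    have h1 : Real.cosh t ≤ Real.cosh (ν * t) := by
      rw [Real.cosh_le_cosh]
      rw [abs_of_nonneg ht', abs_of_nonneg (mul_nonneg (by linarith) ht')]
      nlinarith
    have h2 : Real.exp t / 2 ≤ Real.cosh t := half_exp_le_cosh t
    have h3 : Real.exp (-x * Real.exp t) ≤ Real.exp (-x * Real.cosh t) := by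
      rw [Real.exp_le_exp]
      have := cosh_le_exp_aux ht'
      nlinarith
    have h4 : Real.exp (t - x * Real.exp t)
        = Real.exp (-x * Real.exp t) * Real.exp t := by
      rw [← Real.exp_add]; ring_nf
    rw [h4]
    calc (1/2) * (Real.exp (-x * Real.exp t) * Real.exp t)
        = Real.exp (-x * Real.exp t) * (Real.exp t / 2) := by ring
      _ ≤ Real.exp (-x * Real.cosh t) * Real.cosh (ν * t) :=
          mul_le_mul h3 (h2.trans h1) (by positivity) (Real.exp_pos _).le
  have hmono := MeasureTheory.setIntegral_mono_on
    ((int_aux hx).const_mul (1/2 : ℝ))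
    (besselK_integrand_integrable (by linarith) hx)
    measurableSet_Ioi key
  have hval : ∫ t in Ioi (0:ℝ), (1/2 : ℝ) * Real.exp (t - x * Real.exp t)
      = Real.exp (-x) / (2 * x) := by
    rw [MeasureTheory.integral_const_mul, integral_val hx]
    ring
  rw [hval] at hmono
  exact hmono

theorem stmt_13 (j κ : ℝ) (hj : 1 ≤ |j|) (hκ : 0 < κ) :
    ¬ MeasureTheory.IntegrableOn (fun r : ℝ => (besselK |j| (κ * r)) ^ 2 * r)
      (Set.Ioi 0) := by
  intro h
  set b : ℝ := 1 / κ with hb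
  have hb0 : 0 < b := by positivity
  set C : ℝ := Real.exp (-1) ^ 2 / (4 * κ ^ 2) with hC
  have hC0 : 0 < C := by positivity
  have hsub : Ioo (0:ℝ) b ⊆ Ioi 0 := Ioo_subset_Ioi_self
  have hint : IntegrableOn (fun r : ℝ => C * r⁻¹) (Ioo 0 b) := by
    refine (h.mono_set hsub).integrable.mono ?_ ?_
    · exact (continuous_const.aestronglyMeasurable.mul
        measurable_inv.aestronglyMeasurable)
    · filter_upwards [ae_restrict_mem measurableSet_Ioo] with r hr
      obtain ⟨hr0, hrb⟩ := hr
      have hκr : 0 < κ * r := mul_pos hκ hr0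
      have hκr1 : κ * r ≤ 1 := by
        rw [hb, lt_div_iff₀ hκ] at hrb; nlinarith
      have hK : Real.exp (-1) / (2 * (κ * r)) ≤ besselK |j| (κ * r) := by
        refine le_trans ?_ (besselK_lower hj hκr)
        gcongr <;> linarith
      have hKpos : 0 < Real.exp (-1) / (2 * (κ * r)) := by positivity
      have hsq : (Real.exp (-1) / (2 * (κ * r))) ^ 2 ≤ (besselK |j| (κ * r)) ^ 2 := by
        exact pow_le_pow_left₀ hKpos.le hK 2
      have hbound : C * r⁻¹ ≤ (besselK |j| (κ * r)) ^ 2 * r := by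
        have h1 : (Real.exp (-1) / (2 * (κ * r))) ^ 2 * r = C * r⁻¹ := by
          rw [hC]; field_simp; ring
        rw [← h1]
        exact mul_le_mul_of_nonneg_right hsq hr0.le
      rw [Real.norm_eq_abs, Real.norm_eq_abs,
        abs_of_pos (mul_pos hC0 (inv_pos.mpr hr0)),
        abs_of_nonneg (le_trans (mul_pos hC0 (inv_pos.mpr hr0)).le hbound)]
      exact hbound
  have hinv : IntegrableOn (fun r : ℝ => r⁻¹) (Ioo 0 b) := by
    have h2 := hint.const_mul C⁻¹
    refine MeasureTheory.IntegrableOn.congr_fun h2 ?_ measurableSet_Ioo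
    intro r _
    field_simp
  have hIoc : IntegrableOn (fun r : ℝ => r⁻¹) (Ioc 0 b) := by
    rwa [integrableOn_Ioc_iff_integrableOn_Ioo]
  have hii : IntervalIntegrable (fun r : ℝ => r⁻¹) volume 0 b := by
    rwa [intervalIntegrable_iff_integrableOn_Ioc_of_le hb0.le]
  rw [intervalIntegrable_inv_iff] at hii
  rcases hii with h1 | h2
  · exact hb0.ne h1
  · exact h2 left_mem_uIcc
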